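/- arXiv:1509.04736 — 8 statements merged into one kernel-verified Lean document; each statement's English description precedes it below -/
import Mathlib

section
/- In the quantum spatial ageing algebra A, for every positive integer i, the identity E·Y^i = ((q^{-2i}-1)/(q^{-2}-1))·X·Y^{i-1} + q^{-i}·Y^i·E holds. -/
/-- Generators of the quantum spatial ageing algebra. -/
inductive QGen : Type
  | E | K | Kinv | X | Y

open FreeAlgebra in
/-- Defining relations of the quantum spatial ageing algebra
`EK = q⁻²KE`, `XK = q⁻¹KX`, `YK = qKY`, `EX = qXE`, `EY = X + q⁻¹YE`, `qYX = XY`,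
together with `K K⁻¹ = K⁻¹ K = 1`. -/
inductive QSARel (k : Type) [Field k] (q : k) :
    FreeAlgebra k QGen → FreeAlgebra k QGen → Prop
  | KKinv : QSARel k q (ι k QGen.K * ι k QGen.Kinv) 1
  | KinvK : QSARel k q (ι k QGen.Kinv * ι k QGen.K) 1
  | EK : QSARel k q (ι k QGen.E * ι k QGen.K) ((q ^ 2)⁻¹ • (ι k QGen.K * ι k QGen.E))
  | XK : QSARel k q (ι k QGen.X * ι k QGen.K) (q⁻¹ • (ι k QGen.K * ι k QGen.X))
  | YK : QSARel k q (ι k QGen.Y * ι k QGen.K) (q • (ι k QGen.K * ι k QGen.Y))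
  | EX : QSARel k q (ι k QGen.E * ι k QGen.X) (q • (ι k QGen.X * ι k QGen.E))
  | EY : QSARel k q (ι k QGen.E * ι k QGen.Y)
      (ι k QGen.X + q⁻¹ • (ι k QGen.Y * ι k QGen.E))
  | YX : QSARel k q (q • (ι k QGen.Y * ι k QGen.X)) (ι k QGen.X * ι k QGen.Y)

/-- The quantum spatial ageing algebra `𝒜 = 𝕂_q[X,Y] ⋊ U_q^{≥0}(sl₂)`. -/
noncomputable abbrev QSA (k : Type) [Field k] (q : k) : Type := RingQuot (QSARel k q)

noncomputable def Egen (k : Type) [Field k] (q : k) : QSA k q :=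
  RingQuot.mkAlgHom k (QSARel k q) (FreeAlgebra.ι k QGen.E)
noncomputable def Kgen (k : Type) [Field k] (q : k) : QSA k q :=
  RingQuot.mkAlgHom k (QSARel k q) (FreeAlgebra.ι k QGen.K)
noncomputable def Kinvgen (k : Type) [Field k] (q : k) : QSA k q :=
  RingQuot.mkAlgHom k (QSARel k q) (FreeAlgebra.ι k QGen.Kinv)
noncomputable def Xgen (k : Type) [Field k] (q : k) : QSA k q :=
  RingQuot.mkAlgHom k (QSARel k q) (FreeAlgebra.ι k QGen.X)
noncomputable def Ygen (k : Type) [Field k] (q : k) : QSA k q :=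
  RingQuot.mkAlgHom k (QSARel k q) (FreeAlgebra.ι k QGen.Y)

/-- The normal element `φ = EY - qYE`. -/
noncomputable def phi (k : Type) [Field k] (q : k) : QSA k q :=
  Egen k q * Ygen k q - q • (Ygen k q * Egen k q)


lemma rel_EY (k : Type) [Field k] (q : k) :
    Egen k q * Ygen k q = Xgen k q + q⁻¹ • (Ygen k q * Egen k q) := by
  have h := RingQuot.mkAlgHom_rel k (QSARel.EY (k := k) (q := q))
  simpa [Egen, Ygen, Xgen, map_mul, map_add, map_smul] using h

lemma rel_YX (k : Type) [Field k] (q : k) (hq : q ≠ 0) :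
    Ygen k q * Xgen k q = q⁻¹ • (Xgen k q * Ygen k q) := by
  have h := RingQuot.mkAlgHom_rel k (QSARel.YX (k := k) (q := q))
  simp only [map_mul, map_smul] at h
  simp only [Ygen, Xgen]
  rw [← h, smul_smul, inv_mul_cancel₀ hq, one_smul]

lemma Ypow_X (k : Type) [Field k] (q : k) (hq : q ≠ 0) (i : ℕ) :
    Ygen k q ^ i * Xgen k q = q⁻¹ ^ i • (Xgen k q * Ygen k q ^ i) := by
  induction i with
  | zero => simp
  | succ n ih =>
    rw [pow_succ, mul_assoc, rel_YX k q hq, mul_smul_comm, ← mul_assoc, ih,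
      smul_mul_assoc, smul_smul, mul_assoc, ← pow_succ, ← pow_succ']

lemma qden (k : Type) [Field k] (q : k)
    (hq' : ∀ n : ℕ, n ≠ 0 → q ^ n ≠ 1) : q⁻¹ ^ 2 - 1 ≠ 0 := by
  rw [sub_ne_zero, inv_pow, ne_eq, inv_eq_one]
  exact hq' 2 (by norm_num)

/-- Lemma: `EYⁱ = ((q^{-2i}-1)/(q^{-2}-1)) X Y^{i-1} + q^{-i} Yⁱ E`. -/
theorem stmt0 (k : Type) [Field k] (q : k) (hq : q ≠ 0)
    (hq' : ∀ n : ℕ, n ≠ 0 → q ^ n ≠ 1) (i : ℕ) (hi : 1 ≤ i) :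
    Egen k q * Ygen k q ^ i =
      ((q⁻¹ ^ (2 * i) - 1) / (q⁻¹ ^ 2 - 1)) • (Xgen k q * Ygen k q ^ (i - 1)) +
        q⁻¹ ^ i • (Ygen k q ^ i * Egen k q) := by
  have hden := qden k q hq'
  induction i with
  | zero => omega
  | succ n ih =>
    rcases Nat.lt_or_ge 1 (n + 1) with h1 | h1
    · -- inductive step
      have hn : 1 ≤ n := by omega
      have ih' := ih hn
      have hY : Ygen k q ^ (n - 1) * Ygen k q = Ygen k q ^ n := by
        rw [← pow_succ]
        congr 1
        omega
      have h2 : Ygen k q ^ n * (Ygen k q * Egen k q)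
          = Ygen k q ^ (n + 1) * Egen k q := by
        rw [← mul_assoc, ← pow_succ]
      rw [pow_succ, ← mul_assoc, ih', add_mul, smul_mul_assoc, smul_mul_assoc,
        mul_assoc, hY, mul_assoc, rel_EY k q, Nat.add_sub_cancel,
        mul_add, mul_smul_comm, h2, Ypow_X k q hq n,
        smul_add, smul_smul, smul_smul, ← pow_succ, ← add_assoc, ← add_smul]
      congr 2
      have hp : q⁻¹ ^ n * q⁻¹ ^ n = q⁻¹ ^ (2 * n) := by
        rw [← pow_add]
        congr 1
        omega
      have e1 : 2 * (n + 1) = 2 * n + 2 := by ring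
      rw [hp, e1, pow_add]
      · rw [div_add' _ _ _ hden, div_eq_div_iff hden hden]
        ring
      · rw [pow_succ]
    · -- base case i = 1
      obtain rfl : n = 0 := by omega
      simp only [zero_add, pow_one, mul_one, pow_zero, Nat.sub_self]
      rw [rel_EY k q, div_self hden, one_smul]
end

section
/- In the quantum spatial ageing algebra A, for every positive integer i, the identity Y·E^i = q^i·E^i·Y − (q(1−q^{2i})/(1−q^2))·X·E^{i−1} holds. -/
/-- `YEⁱ = qⁱ Eⁱ Y − (q(1−q^{2i})/(1−q²)) X E^{i−1}`. -/
theorem stmt1 (k : Type) [Field k] (q : k) (hq : q ≠ 0)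
    (hq' : ∀ n : ℕ, n ≠ 0 → q ^ n ≠ 1) (i : ℕ) (hi : 1 ≤ i) :
    Ygen k q * Egen k q ^ i =
      q ^ i • (Egen k q ^ i * Ygen k q) -
        (q * (1 - q ^ (2 * i)) / (1 - q ^ 2)) • (Xgen k q * Egen k q ^ (i - 1)) := by
  have h2 : (1 : k) - q ^ 2 ≠ 0 := sub_ne_zero.mpr fun h => hq' 2 (by norm_num) h.symm
  have hEY : Egen k q * Ygen k q = Xgen k q + q⁻¹ • (Ygen k q * Egen k q) := by
    have := RingQuot.mkAlgHom_rel k (QSARel.EY (k := k) (q := q))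
    simpa [map_mul, map_add, Egen, Xgen, Ygen] using this
  have hEX : Egen k q * Xgen k q = q • (Xgen k q * Egen k q) := by
    have := RingQuot.mkAlgHom_rel k (QSARel.EX (k := k) (q := q))
    simpa [map_mul, Egen, Xgen] using this
  have hYE : Ygen k q * Egen k q = q • (Egen k q * Ygen k q) - q • Xgen k q := by
    rw [hEY, smul_add, smul_smul, mul_inv_cancel₀ hq, one_smul]
    module
  have hEiX : ∀ n : ℕ, Egen k q ^ n * Xgen k q = q ^ n • (Xgen k q * Egen k q ^ n) := by
    intro n
    induction n with
    | zero => simp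
    | succ m ih =>
        rw [pow_succ, mul_assoc, hEX, mul_smul_comm, ← mul_assoc, ih]
        rw [smul_mul_assoc, smul_smul, mul_assoc, ← pow_succ, pow_succ]
        ring_nf
  induction i, hi using Nat.le_induction with
  | base =>
      simp only [pow_one, Nat.sub_self, pow_zero, mul_one]
      rw [mul_div_assoc, div_self h2, mul_one, hYE]
  | succ n hn ih =>
      have hsub : n + 1 - 1 = n := rfl
      have hsub' : Egen k q ^ (n - 1) * Egen k q = Egen k q ^ n := by
        rw [← pow_succ, Nat.sub_add_cancel hn]
      rw [pow_succ, ← mul_assoc, ih, sub_mul, smul_mul_assoc, smul_mul_assoc,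
        mul_assoc, hYE, hsub, mul_assoc, hsub']
      rw [mul_sub, mul_smul_comm, mul_smul_comm, ← mul_assoc, ← pow_succ, hEiX]
      have hc : q * (1 - q ^ (2 * (n + 1))) / (1 - q ^ 2)
          = q ^ n * (q * q ^ n) + q * (1 - q ^ (2 * n)) / (1 - q ^ 2) := by
        field_simp
        ring
      rw [hc]
      match_scalars <;> ring
end

section
/- In the quantum spatial ageing algebra A, the element φ = EY − qYE satisfies the commutation relations Xφ = φX, Yφ = qφY, Eφ = q^{-1}φE and Kφ = qφK; in particular φ is a normal element of A. -/
section Aux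
variable (k : Type) [Field k] (q : k)

private lemma qsa_rel {a b : FreeAlgebra k QGen} (h : QSARel k q a b) :
    RingQuot.mkAlgHom k (QSARel k q) a = RingQuot.mkAlgHom k (QSARel k q) b :=
  RingQuot.mkAlgHom_rel k h

lemma hKKinv : Kgen k q * Kinvgen k q = 1 := by
  have := qsa_rel k q QSARel.KKinv
  simpa [Kgen, Kinvgen, map_mul] using this

lemma hKinvK : Kinvgen k q * Kgen k q = 1 := by
  have := qsa_rel k q QSARel.KinvK
  simpa [Kgen, Kinvgen, map_mul] using this

lemma hEK : Egen k q * Kgen k q = (q ^ 2)⁻¹ • (Kgen k q * Egen k q) := by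
  have := qsa_rel k q QSARel.EK
  simpa [Egen, Kgen, map_mul, map_smul] using this

lemma hXK : Xgen k q * Kgen k q = q⁻¹ • (Kgen k q * Xgen k q) := by
  have := qsa_rel k q QSARel.XK
  simpa [Xgen, Kgen, map_mul, map_smul] using this

lemma hYK : Ygen k q * Kgen k q = q • (Kgen k q * Ygen k q) := by
  have := qsa_rel k q QSARel.YK
  simpa [Ygen, Kgen, map_mul, map_smul] using this

lemma hEX : Egen k q * Xgen k q = q • (Xgen k q * Egen k q) := by
  have := qsa_rel k q QSARel.EX
  simpa [Egen, Xgen, map_mul, map_smul] using this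

lemma hEY : Egen k q * Ygen k q = Xgen k q + q⁻¹ • (Ygen k q * Egen k q) := by
  have := qsa_rel k q QSARel.EY
  simpa [Egen, Xgen, Ygen, map_mul, map_add, map_smul] using this

lemma hYX : q • (Ygen k q * Xgen k q) = Xgen k q * Ygen k q := by
  have := qsa_rel k q QSARel.YX
  simpa [Xgen, Ygen, map_mul, map_smul] using this

end Aux

section Main
variable (k : Type) [Field k] (q : k) (hq : q ≠ 0)

lemma phi_eq : phi k q = Xgen k q + (q⁻¹ - q) • (Ygen k q * Egen k q) := by
  rw [phi, hEY]; module

include hq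

lemma hXY : Xgen k q * Ygen k q = q • (Ygen k q * Xgen k q) := (hYX k q).symm

lemma hXY' (t : QSA k q) :
    Xgen k q * (Ygen k q * t) = q • (Ygen k q * (Xgen k q * t)) := by
  rw [← mul_assoc, hXY k q hq, smul_mul_assoc, mul_assoc]

lemma hEX' (t : QSA k q) :
    Egen k q * (Xgen k q * t) = q • (Xgen k q * (Egen k q * t)) := by
  rw [← mul_assoc, hEX, smul_mul_assoc, mul_assoc]

lemma hEY' (t : QSA k q) :
    Egen k q * (Ygen k q * t) = Xgen k q * t + q⁻¹ • (Ygen k q * (Egen k q * t)) := by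
  rw [← mul_assoc, hEY, add_mul, smul_mul_assoc, mul_assoc]

lemma hKX : Kgen k q * Xgen k q = q • (Xgen k q * Kgen k q) := by
  rw [hXK, smul_smul, mul_inv_cancel₀ hq, one_smul]

lemma hKX' (t : QSA k q) :
    Kgen k q * (Xgen k q * t) = q • (Xgen k q * (Kgen k q * t)) := by
  rw [← mul_assoc, hKX k q hq, smul_mul_assoc, mul_assoc]

lemma hKY : Kgen k q * Ygen k q = q⁻¹ • (Ygen k q * Kgen k q) := by
  rw [hYK, smul_smul, inv_mul_cancel₀ hq, one_smul]

lemma hKY' (t : QSA k q) :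
    Kgen k q * (Ygen k q * t) = q⁻¹ • (Ygen k q * (Kgen k q * t)) := by
  rw [← mul_assoc, hKY k q hq, smul_mul_assoc, mul_assoc]

lemma hKE : Kgen k q * Egen k q = (q ^ 2) • (Egen k q * Kgen k q) := by
  rw [hEK, smul_smul, mul_inv_cancel₀ (pow_ne_zero 2 hq), one_smul]

lemma hKE' (t : QSA k q) :
    Kgen k q * (Egen k q * t) = (q ^ 2) • (Egen k q * (Kgen k q * t)) := by
  rw [← mul_assoc, hKE k q hq, smul_mul_assoc, mul_assoc]

lemma rel1 : Xgen k q * phi k q = phi k q * Xgen k q := by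
  simp only [phi_eq, mul_add, add_mul, smul_add, smul_smul, smul_mul_assoc,
    mul_smul_comm, mul_assoc, hEX, hEX' k q hq, hEY, hEY' k q hq, hXY k q hq,
    hXY' k q hq]

lemma rel2 : Ygen k q * phi k q = q • (phi k q * Ygen k q) := by
  simp only [phi_eq, mul_add, add_mul, smul_add, smul_smul, smul_mul_assoc,
    mul_smul_comm, mul_assoc, hEX, hEX' k q hq, hEY, hEY' k q hq, hXY k q hq,
    hXY' k q hq]
  match_scalars <;> field_simp <;> ring

lemma rel3 : Egen k q * phi k q = q⁻¹ • (phi k q * Egen k q) := by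
  simp only [phi_eq, mul_add, add_mul, smul_add, smul_smul, smul_mul_assoc,
    mul_smul_comm, mul_assoc, hEX, hEX' k q hq, hEY, hEY' k q hq, hXY k q hq,
    hXY' k q hq]
  match_scalars <;> field_simp <;> ring

lemma rel4 : Kgen k q * phi k q = q • (phi k q * Kgen k q) := by
  simp only [phi_eq, mul_add, add_mul, smul_add, smul_smul, smul_mul_assoc,
    mul_smul_comm, mul_assoc, hKX k q hq, hKX' k q hq, hKY k q hq, hKY' k q hq,
    hKE k q hq, hKE' k q hq]
  match_scalars <;> field_simp <;> first | ring1 | exact Or.inl (by ring)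

end Main

lemma hphiKinv (k : Type) [Field k] (q : k) (hq : q ≠ 0) :
    phi k q * Kinvgen k q = q • (Kinvgen k q * phi k q) := by
  have h4 := rel4 k q hq
  calc phi k q * Kinvgen k q
      = Kinvgen k q * Kgen k q * (phi k q * Kinvgen k q) := by
        rw [hKinvK, one_mul]
    _ = Kinvgen k q * ((Kgen k q * phi k q) * Kinvgen k q) := by
        simp only [mul_assoc]
    _ = Kinvgen k q * ((q • (phi k q * Kgen k q)) * Kinvgen k q) := by rw [h4]
    _ = q • (Kinvgen k q * (phi k q * (Kgen k q * Kinvgen k q))) := by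
        simp only [smul_mul_assoc, mul_smul_comm, mul_assoc]
    _ = q • (Kinvgen k q * phi k q) := by rw [hKKinv, mul_one]

/-- `Xφ = φX`, `Yφ = qφY`, `Eφ = q⁻¹φE`, `Kφ = qφK`;
in particular `φ` is a normal element of `𝒜`, i.e. `φ𝒜 = 𝒜φ`. -/
theorem stmt3 (k : Type) [Field k] (q : k) (hq : q ≠ 0)
    (hq' : ∀ n : ℕ, n ≠ 0 → q ^ n ≠ 1) :
    Xgen k q * phi k q = phi k q * Xgen k q ∧
    Ygen k q * phi k q = q • (phi k q * Ygen k q) ∧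
    Egen k q * phi k q = q⁻¹ • (phi k q * Egen k q) ∧
    Kgen k q * phi k q = q • (phi k q * Kgen k q) ∧
    Set.range (fun a : QSA k q => phi k q * a) =
      Set.range (fun a : QSA k q => a * phi k q) := by
  have h1 := rel1 k q hq
  have h2 := rel2 k q hq
  have h3 := rel3 k q hq
  have h4 := rel4 k q hq
  have hKi := hphiKinv k q hq
  refine ⟨h1, h2, h3, h4, ?_⟩
  have key : ∀ a : QSA k q,
      (∃ b, phi k q * a = b * phi k q) ∧ (∃ b, a * phi k q = phi k q * b) := by
    intro a
    obtain ⟨x, rfl⟩ := RingQuot.mkAlgHom_surjective k (QSARel k q) a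
    induction x using FreeAlgebra.induction with
    | grade0 r =>
        rw [AlgHom.commutes]
        exact ⟨⟨algebraMap k _ r, ((Algebra.commutes r (phi k q)).symm).symm ▸
            (Algebra.commutes r (phi k q)).symm⟩,
          ⟨algebraMap k _ r, Algebra.commutes r (phi k q)⟩⟩
    | grade1 g =>
        cases g with
        | E =>
            refine ⟨⟨q • Egen k q, ?_⟩, ⟨q⁻¹ • Egen k q, ?_⟩⟩
            · rw [smul_mul_assoc, h3, smul_smul, mul_inv_cancel₀ hq, one_smul]; rfl
            · rw [mul_smul_comm]; exact h3
        | K =>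
            refine ⟨⟨q⁻¹ • Kgen k q, ?_⟩, ⟨q • Kgen k q, ?_⟩⟩
            · rw [smul_mul_assoc, h4, smul_smul, inv_mul_cancel₀ hq, one_smul]; rfl
            · rw [mul_smul_comm]; exact h4
        | Kinv =>
            refine ⟨⟨q • Kinvgen k q, ?_⟩, ⟨q⁻¹ • Kinvgen k q, ?_⟩⟩
            · rw [smul_mul_assoc]; exact hKi
            · rw [mul_smul_comm, hKi, smul_smul, inv_mul_cancel₀ hq, one_smul]; rfl
        | X => exact ⟨⟨Xgen k q, h1.symm⟩, ⟨Xgen k q, h1⟩⟩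
        | Y =>
            refine ⟨⟨q⁻¹ • Ygen k q, ?_⟩, ⟨q • Ygen k q, ?_⟩⟩
            · rw [smul_mul_assoc, h2, smul_smul, inv_mul_cancel₀ hq, one_smul]; rfl
            · rw [mul_smul_comm]; exact h2
    | mul x y hx hy =>
        rw [map_mul]
        obtain ⟨⟨b1, hb1⟩, ⟨b2, hb2⟩⟩ := hx
        obtain ⟨⟨c1, hc1⟩, ⟨c2, hc2⟩⟩ := hy
        refine ⟨⟨b1 * c1, ?_⟩, ⟨b2 * c2, ?_⟩⟩
        · rw [← mul_assoc, hb1, mul_assoc, hc1, ← mul_assoc]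
        · rw [mul_assoc, hc2, ← mul_assoc, hb2, mul_assoc]
    | add x y hx hy =>
        rw [map_add]
        obtain ⟨⟨b1, hb1⟩, ⟨b2, hb2⟩⟩ := hx
        obtain ⟨⟨c1, hc1⟩, ⟨c2, hc2⟩⟩ := hy
        exact ⟨⟨b1 + c1, by rw [mul_add, hb1, hc1, add_mul]⟩,
          ⟨b2 + c2, by rw [add_mul, hb2, hc2, mul_add]⟩⟩
  ext y
  simp only [Set.mem_range]
  constructor
  · rintro ⟨a, rfl⟩
    obtain ⟨b, hb⟩ := (key a).1
    exact ⟨b, hb.symm⟩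
  · rintro ⟨a, rfl⟩
    obtain ⟨b, hb⟩ := (key a).2
    exact ⟨b, hb.symm⟩
end

section
/- Let E be a ring D[X,Y;σ,b,ρ] generated by a ring D and elements X, Y subject to Xα = σ(α)X and Yα = σ^{-1}(α)Y for all α ∈ D and XY − ρYX = b, where σ is an automorphism of D, b and ρ are central in D, ρ is invertible, and σ(ρ) = ρ. If α is a central element of D with ρα − σ(α) = b, then the element C := ρ(YX + α) satisfies C = XY + σ(α) and C is a normal element of E. -/
/-- let `E = D[X,Y;σ,b,ρ]` be a ring containing (the image of) a ring `D`
and elements `X, Y` with `Xα = σ(α)X`, `Yα = σ⁻¹(α)Y` for all `α ∈ D` and `XY − ρYX = b`,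
where `σ ∈ Aut(D)`, `b, ρ` are central in `D`, `ρ` is invertible and `σ(ρ) = ρ`.
If `α` is central in `D` with `ρα − σ(α) = b`, then `C = ρ(YX + α)` satisfies
`C = XY + σ(α)` and `C` is a normal element of `E` (i.e. `CE = EC` elementwise). -/
theorem stmt6 {D E : Type*} [Ring D] [Ring E] (f : D →+* E) (σ : D ≃+* D)
    (b ρ α : D) (X Y : E)
    (hb : ∀ d : D, b * d = d * b) (hρ : ∀ d : D, ρ * d = d * ρ)
    (hα : ∀ d : D, α * d = d * α)
    (hρu : IsUnit ρ) (hσρ : σ ρ = ρ)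
    (hX : ∀ d : D, X * f d = f (σ d) * X)
    (hY : ∀ d : D, Y * f d = f (σ.symm d) * Y)
    (hXY : X * Y - f ρ * (Y * X) = f b)
    (hsol : ρ * α - σ α = b)
    (hgen : Subring.closure (Set.range f ∪ {X, Y}) = ⊤) :
    f ρ * (Y * X + f α) = X * Y + f (σ α) ∧
    (∀ r : E, ∃ r' : E, f ρ * (Y * X + f α) * r = r' * (f ρ * (Y * X + f α))) ∧
    (∀ r : E, ∃ r' : E, r * (f ρ * (Y * X + f α)) = f ρ * (Y * X + f α) * r') := by
  obtain ⟨u, hu⟩ := hρu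
  set C := f ρ * (Y * X + f α) with hCdef
  -- C = XY + σα
  have hρYX : f ρ * (Y * X) = X * Y - f b := by rw [← hXY]; noncomm_ring
  have hρα : ρ * α - b = σ α := by rw [← hsol]; noncomm_ring
  have hC2 : C = X * Y + f (σ α) := by
    calc C = f ρ * (Y * X) + f ρ * f α := by rw [hCdef]; noncomm_ring
    _ = X * Y - f b + f (ρ * α) := by rw [hρYX, map_mul]
    _ = X * Y + (f (ρ * α) - f b) := by noncomm_ring
    _ = X * Y + f (ρ * α - b) := by rw [map_sub]
    _ = X * Y + f (σ α) := by rw [hρα]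
  -- C commutes with f d
  have hCd : ∀ d : D, C * f d = f d * C := by
    intro d
    have h1 : Y * X * f d = f d * (Y * X) := by
      calc Y * X * f d = Y * (f (σ d) * X) := by rw [mul_assoc, hX]
      _ = (f d * Y) * X := by rw [← mul_assoc, hY, σ.symm_apply_apply]
      _ = f d * (Y * X) := by rw [mul_assoc]
    have h2 : f ρ * f d = f d * f ρ := by rw [← map_mul, ← map_mul, hρ]
    have h3 : f α * f d = f d * f α := by rw [← map_mul, ← map_mul, hα]
    calc C * f d = f ρ * (Y * X * f d) + f ρ * (f α * f d) := by rw [hCdef]; noncomm_ring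
    _ = f ρ * (f d * (Y * X)) + f ρ * (f d * f α) := by rw [h1, h3]
    _ = (f ρ * f d) * (Y * X) + (f ρ * f d) * f α := by noncomm_ring
    _ = (f d * f ρ) * (Y * X) + (f d * f ρ) * f α := by rw [h2]
    _ = f d * C := by rw [hCdef]; noncomm_ring
  -- inverse of f ρ
  have hu1 : f ((↑u⁻¹ : D)) * f ρ = 1 := by
    rw [← map_mul, ← hu, Units.inv_mul, map_one]
  have hu2 : f ρ * f ((↑u⁻¹ : D)) = 1 := by
    rw [← map_mul, ← hu, Units.mul_inv, map_one]
  set ρ' := f ((↑u⁻¹ : D)) with hρ'def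
  -- X * C = f ρ * (C * X)
  have hXC : X * C = f ρ * (C * X) := by
    calc X * C = (X * f ρ) * (Y * X + f α) := by rw [hCdef, mul_assoc]
    _ = (f ρ * X) * (Y * X + f α) := by rw [hX, hσρ]
    _ = f ρ * (X * (Y * X) + X * f α) := by noncomm_ring
    _ = f ρ * ((X * Y) * X + f (σ α) * X) := by rw [hX α, ← mul_assoc]
    _ = f ρ * ((X * Y + f (σ α)) * X) := by noncomm_ring
    _ = f ρ * (C * X) := by rw [hC2]
  -- C * Y = f ρ * (Y * C)
  have hCY : C * Y = f ρ * (Y * C) := by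
    have : Y * C = (Y * X) * Y + f α * Y := by
      rw [hC2, mul_add, ← mul_assoc, hY, σ.symm_apply_apply]
    calc C * Y = f ρ * ((Y * X) * Y + f α * Y) := by rw [hCdef]; noncomm_ring
    _ = f ρ * (Y * C) := by rw [← this]
  -- C commutes with ρ'
  have hCρ' : C * ρ' = ρ' * C := hCd _
  have hCρ : C * f ρ = f ρ * C := hCd _
  refine ⟨hC2.symm ▸ rfl, ?_, ?_⟩
  · intro r
    have hmem : r ∈ Subring.closure (Set.range f ∪ {X, Y}) := by
      rw [hgen]; trivial
    induction hmem using Subring.closure_induction with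
    | mem x hx =>
      rcases hx with ⟨d, rfl⟩ | hx
      · exact ⟨f d, hCd d⟩
      · rcases hx with rfl | rfl
        · refine ⟨ρ' * x, ?_⟩
          calc C * x = (ρ' * f ρ) * (C * x) := by rw [hu1, one_mul]
          _ = ρ' * (x * C) := by rw [mul_assoc, ← hXC]
          _ = ρ' * x * C := by rw [mul_assoc]
        · refine ⟨f ρ * x, ?_⟩
          calc C * x = f ρ * (x * C) := hCY
          _ = f ρ * x * C := by rw [mul_assoc]
    | one => exact ⟨1, by rw [mul_one, one_mul]⟩
    | zero => exact ⟨0, by rw [mul_zero, zero_mul]⟩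
    | add x y _ _ ihx ihy =>
      obtain ⟨x', hx'⟩ := ihx; obtain ⟨y', hy'⟩ := ihy
      exact ⟨x' + y', by rw [mul_add, hx', hy', add_mul]⟩
    | neg x _ ihx =>
      obtain ⟨x', hx'⟩ := ihx
      exact ⟨-x', by rw [mul_neg, hx', neg_mul]⟩
    | mul x y _ _ ihx ihy =>
      obtain ⟨x', hx'⟩ := ihx; obtain ⟨y', hy'⟩ := ihy
      exact ⟨x' * y', by rw [← mul_assoc, hx', mul_assoc, hy', ← mul_assoc]⟩
  · intro r
    have hmem : r ∈ Subring.closure (Set.range f ∪ {X, Y}) := by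
      rw [hgen]; trivial
    induction hmem using Subring.closure_induction with
    | mem x hx =>
      rcases hx with ⟨d, rfl⟩ | hx
      · exact ⟨f d, (hCd d).symm⟩
      · rcases hx with rfl | rfl
        · refine ⟨f ρ * x, ?_⟩
          calc x * C = f ρ * (C * x) := hXC
          _ = (C * f ρ) * x := by rw [← mul_assoc, ← hCρ]
          _ = C * (f ρ * x) := by rw [mul_assoc]
        · refine ⟨ρ' * x, ?_⟩
          calc x * C = (ρ' * f ρ) * (x * C) := by rw [hu1, one_mul]
          _ = ρ' * (C * x) := by rw [mul_assoc, ← hCY]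
          _ = (C * ρ') * x := by rw [← mul_assoc, ← hCρ']
          _ = C * (ρ' * x) := by rw [mul_assoc]
    | one => exact ⟨1, by rw [mul_one, one_mul]⟩
    | zero => exact ⟨0, by rw [mul_zero, zero_mul]⟩
    | add x y _ _ ihx ihy =>
      obtain ⟨x', hx'⟩ := ihx; obtain ⟨y', hy'⟩ := ihy
      exact ⟨x' + y', by rw [add_mul, hx', hy', mul_add]⟩
    | neg x _ ihx =>
      obtain ⟨x', hx'⟩ := ihx
      exact ⟨-x', by rw [neg_mul, hx', mul_neg]⟩
    | mul x y _ _ ihx ihy =>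
      obtain ⟨x', hx'⟩ := ihx; obtain ⟨y', hy'⟩ := ihy
      exact ⟨x' * y', by rw [mul_assoc, hy', ← mul_assoc, hx', mul_assoc]⟩
end

section
/- In the quantum spatial ageing algebra A, the two-sided ideal generated by E equals the ideal generated by E and X, and also equals the ideal generated by E and φ = EY − qYE: (E) = (E, X) = (E, φ). -/
lemma Xgen_eq (k : Type) [Field k] (q : k) :
    Xgen k q = Egen k q * Ygen k q - q⁻¹ • (Ygen k q * Egen k q) := by
  have h := RingQuot.mkAlgHom_rel k (QSARel.EY (k := k) (q := q))
  simp only [map_mul, map_add, map_smul] at h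
  rw [show (RingQuot.mkAlgHom k (QSARel k q)) (FreeAlgebra.ι k QGen.E) = Egen k q from rfl,
    show (RingQuot.mkAlgHom k (QSARel k q)) (FreeAlgebra.ι k QGen.Y) = Ygen k q from rfl,
    show (RingQuot.mkAlgHom k (QSARel k q)) (FreeAlgebra.ι k QGen.X) = Xgen k q from rfl] at h
  rw [h]; abel

lemma smul_mem' {k : Type} [Field k] {q : k} (I : TwoSidedIdeal (QSA k q)) (c : k)
    {x : QSA k q} (hx : x ∈ I) : c • x ∈ I := by
  rw [Algebra.smul_def]; exact I.mul_mem_left _ _ hx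

lemma Xgen_mem (k : Type) [Field k] (q : k) (I : TwoSidedIdeal (QSA k q))
    (hE : Egen k q ∈ I) : Xgen k q ∈ I := by
  rw [Xgen_eq]
  exact I.sub_mem (I.mul_mem_right _ _ hE) (smul_mem' I _ (I.mul_mem_left _ _ hE))

/-- `(E) = (E, X) = (E, φ)` as two-sided ideals of `𝒜`. -/
theorem stmt12 (k : Type) [Field k] (q : k) (hq : q ≠ 0)
    (hq' : ∀ n : ℕ, n ≠ 0 → q ^ n ≠ 1) :
    TwoSidedIdeal.span {Egen k q} = TwoSidedIdeal.span {Egen k q, Xgen k q} ∧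
    TwoSidedIdeal.span {Egen k q} = TwoSidedIdeal.span {Egen k q, phi k q} := by
  have hE : ∀ (s : Set (QSA k q)), Egen k q ∈ s → Egen k q ∈ TwoSidedIdeal.span s :=
    fun s hs => TwoSidedIdeal.subset_span hs
  have hX : Xgen k q ∈ TwoSidedIdeal.span {Egen k q} :=
    Xgen_mem k q _ (hE _ rfl)
  have hphi : phi k q ∈ TwoSidedIdeal.span {Egen k q} := by
    unfold phi
    exact TwoSidedIdeal.sub_mem _
      ((TwoSidedIdeal.span {Egen k q}).mul_mem_right _ _ (hE _ rfl))
      (smul_mem' _ _ ((TwoSidedIdeal.span {Egen k q}).mul_mem_left _ _ (hE _ rfl)))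
  constructor
  · apply le_antisymm
    · rw [TwoSidedIdeal.le_iff]
      intro x hx
      exact TwoSidedIdeal.mem_span_iff.mp hx _ (fun y hy =>
        TwoSidedIdeal.subset_span (by exact Set.mem_insert_iff.mpr (Or.inl hy)))
    · rw [TwoSidedIdeal.le_iff]
      intro x hx
      refine TwoSidedIdeal.mem_span_iff.mp hx _ ?_
      rintro y (rfl | rfl)
      · exact TwoSidedIdeal.subset_span rfl
      · exact hX
  · apply le_antisymm
    · rw [TwoSidedIdeal.le_iff]
      intro x hx
      exact TwoSidedIdeal.mem_span_iff.mp hx _ (fun y hy =>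
        TwoSidedIdeal.subset_span (by exact Set.mem_insert_iff.mpr (Or.inl hy)))
    · rw [TwoSidedIdeal.le_iff]
      intro x hx
      refine TwoSidedIdeal.mem_span_iff.mp hx _ ?_
      rintro y (rfl | rfl)
      · exact TwoSidedIdeal.subset_span rfl
      · exact hphi
end

section
/- Let A be a ring, S a left denominator set of A, σ: A → S^{-1}A the localization map, q a completely prime ideal of S^{-1}A, and p an ideal of A with p ⊆ σ^{-1}(q) and S^{-1}p = q. Then p = σ^{-1}(q) if and only if A/p is a domain. -/
/-- let `A` be a ring, `S` a left denominator set of `A`, and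
`σ : A → B = S⁻¹A` the localization map (so every element of `B` is of the form
`(σ s)⁻¹ (σ a)` and `ker σ` is the `S`-torsion). Let `q` be a completely prime
(two-sided) ideal of `B` and `p` a two-sided ideal of `A` with `p ⊆ σ⁻¹(q)` and
`S⁻¹p = q`. Then `p = σ⁻¹(q)` if and only if `A/p` is a domain. -/
theorem stmt14 {A B : Type*} [Ring A] [Ring B] (S : Submonoid A) (σ : A →+* B)
    -- `B = S⁻¹A` is a left localization of `A` at `S`:
    (hunit : ∀ s ∈ S, IsUnit (σ s))
    (hfrac : ∀ b : B, ∃ s ∈ S, ∃ a : A, σ s * b = σ a)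
    (hker : ∀ a : A, σ a = 0 → ∃ s ∈ S, s * a = 0)
    (p : TwoSidedIdeal A) (q : TwoSidedIdeal B)
    -- `q` is a completely prime ideal of `B`:
    (hq_ne : q ≠ ⊤)
    (hq_cp : ∀ x y : B, x * y ∈ q → x ∈ q ∨ y ∈ q)
    -- `p ⊆ σ⁻¹(q)`:
    (hple : ∀ a : A, a ∈ p → σ a ∈ q)
    -- `S⁻¹p = q`:
    (hlocp : ∀ x : B, x ∈ q ↔ ∃ s ∈ S, ∃ a ∈ p, σ s * x = σ a) :
    (∀ a : A, a ∈ p ↔ σ a ∈ q) ↔ IsDomain p.ringCon.Quotient := by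
  have key : ∀ a : A, (a : p.ringCon.Quotient) = 0 ↔ a ∈ p := by
    intro a
    rw [show (0 : p.ringCon.Quotient) = ((0 : A) : p.ringCon.Quotient) from rfl,
      RingCon.eq]
    exact (p.mem_iff a).symm
  have hmem_unit : ∀ x : B, IsUnit x → x ∈ q → False := by
    intro x hx hxq
    obtain ⟨u, rfl⟩ := hx
    exact hq_ne (q.eq_top (by simpa using q.mul_mem_left (↑u⁻¹) _ hxq))
  constructor
  · intro h
    have hnt : (1 : A) ∉ p := fun h1 => hq_ne (q.eq_top (by simpa using hple 1 h1))
    have ntriv : Nontrivial p.ringCon.Quotient :=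
      ⟨1, 0, fun e => hnt ((key 1).1 e)⟩
    have nzd : NoZeroDivisors p.ringCon.Quotient := by
      constructor
      intro x y hxy
      obtain ⟨a⟩ := x
      obtain ⟨b⟩ := y
      have hab : a * b ∈ p := (key (a * b)).1 hxy
      have : σ a * σ b ∈ q := by rw [← map_mul]; exact (h (a * b)).1 hab
      rcases hq_cp _ _ this with h' | h'
      · exact Or.inl ((key a).2 ((h a).2 h'))
      · exact Or.inr ((key b).2 ((h b).2 h'))
    exact NoZeroDivisors.to_isDomain _
  · intro hdom a
    refine ⟨hple a, fun haq => ?_⟩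
    obtain ⟨s, hs, a', ha'p, heq⟩ := (hlocp (σ a)).1 haq
    have h0 : σ (s * a - a') = 0 := by
      rw [map_sub, map_mul, heq, sub_self]
    obtain ⟨t, ht, ht0⟩ := hker _ h0
    have hmem : (t * s) * a ∈ p := by
      have h2 : (t * s) * a = t * a' := by
        rw [mul_assoc, ← sub_eq_zero, ← mul_sub]; exact ht0
      rw [h2]; exact p.mul_mem_left t a' ha'p
    have hts : (t * s) ∉ p := by
      intro hts
      exact hmem_unit _ (by rw [map_mul]; exact (hunit t ht).mul (hunit s hs)) (hple _ hts)
    have : ((t * s : A) : p.ringCon.Quotient) * (a : p.ringCon.Quotient) = 0 := by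
      rw [show ((t * s : A) : p.ringCon.Quotient) * (a : p.ringCon.Quotient)
        = (((t * s) * a : A) : p.ringCon.Quotient) from rfl]
      exact (key _).2 hmem
    rcases mul_eq_zero.mp this with h' | h'
    · exact absurd ((key _).1 h') hts
    · exact (key a).1 h'
end

section
/- In the quantum spatial ageing algebra A, the identity EY^2 = (1/(q(1−q^2)))·Yφ + (q^3/(q^2−1))·YX holds, where φ = EY − qYE. -/
/-- `EY² = (1/(q(1−q²)))Yφ + (q³/(q²−1))YX`. -/
theorem stmt18 (k : Type) [Field k] (q : k) (hq : q ≠ 0)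
    (hq' : ∀ n : ℕ, n ≠ 0 → q ^ n ≠ 1) :
    Egen k q * Ygen k q ^ 2 =
      (q * (1 - q ^ 2))⁻¹ • (Ygen k q * phi k q) +
        (q ^ 3 / (q ^ 2 - 1)) • (Ygen k q * Xgen k q) := by
  have h2 : (1 : k) - q ^ 2 ≠ 0 := sub_ne_zero.mpr fun h => hq' 2 two_ne_zero h.symm
  have hEY : Egen k q * Ygen k q = Xgen k q + q⁻¹ • (Ygen k q * Egen k q) := by
    have := RingQuot.mkAlgHom_rel k (QSARel.EY (k := k) (q := q))
    simpa [Egen, Ygen, Xgen, map_mul, map_add] using this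
  have hYX : q • (Ygen k q * Xgen k q) = Xgen k q * Ygen k q := by
    have := RingQuot.mkAlgHom_rel k (QSARel.YX (k := k) (q := q))
    simpa [Ygen, Xgen, map_mul] using this
  rw [pow_two, ← mul_assoc, hEY, add_mul, smul_mul_assoc, mul_assoc, hEY, ← hYX, phi, hEY]
  simp only [mul_add, mul_sub]
  simp only [mul_smul_comm, smul_add, smul_sub, smul_smul]
  have h3 : q ^ 2 - 1 ≠ 0 := sub_ne_zero.mpr (hq' 2 two_ne_zero)
  have h7 : q - q * q ^ 2 ≠ 0 := by
    have h : q - q * q ^ 2 = q * (1 - q ^ 2) := by ring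
    rw [h]; exact mul_ne_zero hq h2
  match_scalars
  all_goals field_simp
  all_goals ring
end

section
/- Let N be a module over the quantum plane Λ = K⟨t, u | tu = q^2ut⟩ over a field extension D/p of K on which K acts by a fixed scalar; then the formulas K(Y^i⊗v) = q^{-i}Y^i⊗Kv, Y(Y^i⊗v) = Y^{i+1}⊗v, X(Y^i⊗v) = q^iY^{i-1}⊗tv, E(Y^i⊗v) = Y^{i-2}⊗((q^{-i}u − q^it)/(q^{-1}−q))v define on the vector space K[Y,Y^{-1}]⊗N a module structure over the quantum spatial ageing algebra A, i.e., these operators satisfy the defining relations EK = q^{-2}KE, XK = q^{-1}KX, YK = qKY, EX = qXE, EY = X + q^{-1}YE, qYX = XY. -/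
noncomputable section

variable (k : Type) [Field k] (q : k) {N : Type} [AddCommGroup N] [Module k N]

/-- The action of `K` on `𝕂[Y,Y⁻¹] ⊗ N = ⊕_{i∈ℤ} Yⁱ ⊗ N`:
`K(Yⁱ ⊗ v) = q⁻ⁱ Yⁱ ⊗ Kv`. -/
def KM (KN : N →ₗ[k] N) (f : ℤ →₀ N) : ℤ →₀ N :=
  f.sum fun i v => Finsupp.single i ((q ^ (-i) : k) • KN v)

/-- The action of `Y`: `Y(Yⁱ ⊗ v) = Yⁱ⁺¹ ⊗ v`. -/
def YM (f : ℤ →₀ N) : ℤ →₀ N :=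
  f.sum fun i v => Finsupp.single (i + 1) v

/-- The action of `X`: `X(Yⁱ ⊗ v) = qⁱ Yⁱ⁻¹ ⊗ tv`. -/
def XM (tN : N →ₗ[k] N) (f : ℤ →₀ N) : ℤ →₀ N :=
  f.sum fun i v => Finsupp.single (i - 1) ((q ^ i : k) • tN v)

/-- The action of `E`: `E(Yⁱ ⊗ v) = Yⁱ⁻² ⊗ ((q⁻ⁱu − qⁱt)/(q⁻¹ − q))v`. -/
def EM (tN uN : N →ₗ[k] N) (f : ℤ →₀ N) : ℤ →₀ N :=
  f.sum fun i v =>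
    Finsupp.single (i - 2)
      ((q⁻¹ - q)⁻¹ • ((q ^ (-i) : k) • uN v - (q ^ i : k) • tN v))

section aux

variable (KN tN uN : N →ₗ[k] N)

lemma KM_zero : KM k q KN 0 = 0 := Finsupp.sum_zero_index

lemma KM_single (i : ℤ) (v : N) :
    KM k q KN (Finsupp.single i v) = Finsupp.single i ((q ^ (-i) : k) • KN v) :=
  Finsupp.sum_single_index (by simp)

lemma KM_add (f g : ℤ →₀ N) :
    KM k q KN (f + g) = KM k q KN f + KM k q KN g :=
  Finsupp.sum_add_index (fun _ _ => by simp)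
    (fun i _ v w => by simp [smul_add, Finsupp.single_add])

lemma YM_zero : YM (0 : ℤ →₀ N) = 0 := Finsupp.sum_zero_index

lemma YM_single (i : ℤ) (v : N) :
    YM (Finsupp.single i v) = Finsupp.single (i + 1) v :=
  Finsupp.sum_single_index (by simp)

lemma YM_add (f g : ℤ →₀ N) : YM (f + g) = YM f + YM g :=
  Finsupp.sum_add_index (fun _ _ => by simp)
    (fun i _ v w => by simp [Finsupp.single_add])

lemma XM_zero : XM k q tN 0 = 0 := Finsupp.sum_zero_index

lemma XM_single (i : ℤ) (v : N) :
    XM k q tN (Finsupp.single i v) = Finsupp.single (i - 1) ((q ^ i : k) • tN v) :=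
  Finsupp.sum_single_index (by simp)

lemma XM_add (f g : ℤ →₀ N) :
    XM k q tN (f + g) = XM k q tN f + XM k q tN g :=
  Finsupp.sum_add_index (fun _ _ => by simp)
    (fun i _ v w => by simp [smul_add, Finsupp.single_add])

lemma EM_zero : EM k q tN uN 0 = 0 := Finsupp.sum_zero_index

lemma EM_single (i : ℤ) (v : N) :
    EM k q tN uN (Finsupp.single i v) =
      Finsupp.single (i - 2)
        ((q⁻¹ - q)⁻¹ • ((q ^ (-i) : k) • uN v - (q ^ i : k) • tN v)) :=
  Finsupp.sum_single_index (by simp)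

lemma EM_add (f g : ℤ →₀ N) :
    EM k q tN uN (f + g) = EM k q tN uN f + EM k q tN uN g :=
  Finsupp.sum_add_index (fun _ _ => by simp)
    (fun i _ v w => by
      rw [← Finsupp.single_add, ← smul_add]
      congr 1
      simp only [map_add]
      module)

end aux

/-- if `N` is a module over the quantum plane
`Λ = 𝕂⟨t, u | tu = q²ut⟩` on which `K` acts commuting with `t` and `u`, then the
formulas `K(Yⁱ⊗v) = q⁻ⁱYⁱ⊗Kv`, `Y(Yⁱ⊗v) = Yⁱ⁺¹⊗v`, `X(Yⁱ⊗v) = qⁱYⁱ⁻¹⊗tv`,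
`E(Yⁱ⊗v) = Yⁱ⁻²⊗((q⁻ⁱu−qⁱt)/(q⁻¹−q))v` make `𝕂[Y,Y⁻¹] ⊗ N = ⊕_{i∈ℤ} Yⁱ⊗N` a module
over the quantum spatial ageing algebra `𝒜`, i.e. the operators satisfy the defining
relations `EK = q⁻²KE`, `XK = q⁻¹KX`, `YK = qKY`, `EX = qXE`, `EY = X + q⁻¹YE`,
`qYX = XY`. -/
theorem stmt19 (hq : q ≠ 0) (hq' : ∀ n : ℕ, n ≠ 0 → q ^ n ≠ 1)
    (KN tN uN : N →ₗ[k] N)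
    (htu : ∀ v : N, tN (uN v) = q ^ 2 • uN (tN v))
    (hKt : ∀ v : N, KN (tN v) = tN (KN v))
    (hKu : ∀ v : N, KN (uN v) = uN (KN v)) :
    (∀ f : ℤ →₀ N, EM k q tN uN (KM k q KN f) = (q ^ 2)⁻¹ • KM k q KN (EM k q tN uN f)) ∧
    (∀ f : ℤ →₀ N, XM k q tN (KM k q KN f) = q⁻¹ • KM k q KN (XM k q tN f)) ∧
    (∀ f : ℤ →₀ N, YM (KM k q KN f) = q • KM k q KN (YM f)) ∧
    (∀ f : ℤ →₀ N, EM k q tN uN (XM k q tN f) = q • XM k q tN (EM k q tN uN f)) ∧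
    (∀ f : ℤ →₀ N, EM k q tN uN (YM f) = XM k q tN f + q⁻¹ • YM (EM k q tN uN f)) ∧
    (∀ f : ℤ →₀ N, q • YM (XM k q tN f) = XM k q tN (YM f)) := by
  have h1 : (1 : k) - q * q ≠ 0 := by
    intro h
    exact hq' 2 (by norm_num) (by rw [pow_two]; linear_combination -h)
  have hq2 : q⁻¹ - q ≠ 0 := by
    intro h
    have hqq : q⁻¹ = q := by rwa [sub_eq_zero] at h
    apply h1
    nth_rewrite 2 [← hqq]
    field_simp
    simp
  refine ⟨?_, ?_, ?_, ?_, ?_, ?_⟩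
  · intro f
    induction f using Finsupp.induction with
    | zero => simp [KM_zero, EM_zero]
    | single_add i v g _ _ ih =>
      have hqi : q ^ i ≠ 0 := zpow_ne_zero _ hq
      rw [KM_add, EM_add, EM_add, KM_add, smul_add, ih,
        KM_single, EM_single, EM_single, KM_single, Finsupp.smul_single]
      congr 1
      simp only [map_smul, map_sub, smul_sub, smul_smul, hKu, hKt]
      congr 2 <;>
      · congr 1
        generalize (q⁻¹ - q)⁻¹ = c
        simp only [zpow_add₀ hq, zpow_sub₀ hq, zpow_neg, zpow_one, zpow_natCast, zpow_ofNat]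
        generalize hw : (q : k) ^ i = w at hqi ⊢
        field_simp <;> ring
  · intro f
    induction f using Finsupp.induction with
    | zero => simp [KM_zero, XM_zero]
    | single_add i v g _ _ ih =>
      have hqi : q ^ i ≠ 0 := zpow_ne_zero _ hq
      rw [KM_add, XM_add, XM_add, KM_add, smul_add, ih,
        KM_single, XM_single, XM_single, KM_single, Finsupp.smul_single]
      congr 1
      simp only [map_smul, smul_smul, hKt]
      congr 1
      simp only [zpow_add₀ hq, zpow_sub₀ hq, zpow_neg, zpow_one, zpow_natCast, zpow_ofNat]
      generalize hw : (q : k) ^ i = w at hqi ⊢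
      field_simp
  · intro f
    induction f using Finsupp.induction with
    | zero => simp [KM_zero, YM_zero]
    | single_add i v g _ _ ih =>
      have hqi : q ^ i ≠ 0 := zpow_ne_zero _ hq
      rw [KM_add, YM_add, YM_add, KM_add, smul_add, ih,
        KM_single, YM_single, YM_single, KM_single, Finsupp.smul_single, smul_smul]
      congr 1
      congr 1
      simp only [zpow_add₀ hq, zpow_sub₀ hq, zpow_neg, zpow_one, zpow_natCast, zpow_ofNat]
      generalize hw : (q : k) ^ i = w at hqi ⊢
      congr 1
      field_simp
  · intro f
    induction f using Finsupp.induction with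
    | zero => simp [XM_zero, EM_zero]
    | single_add i v g _ _ ih =>
      have hqi : q ^ i ≠ 0 := zpow_ne_zero _ hq
      rw [XM_add, EM_add, EM_add, XM_add, smul_add, ih,
        EM_single, XM_single, XM_single, EM_single, Finsupp.smul_single,
        show i - 1 - 2 = i - 3 from by omega, show i - 2 - 1 = i - 3 from by omega]
      congr 1
      simp only [map_smul, map_sub, smul_sub, smul_smul, htu]
      congr 2 <;>
      · congr 1
        generalize (q⁻¹ - q)⁻¹ = c
        simp only [zpow_add₀ hq, zpow_sub₀ hq, zpow_neg, zpow_one, zpow_natCast, zpow_ofNat]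
        generalize hw : (q : k) ^ i = w at hqi ⊢
        field_simp <;> ring
  · intro f
    induction f using Finsupp.induction with
    | zero => simp [YM_zero, XM_zero, EM_zero]
    | single_add i v g _ _ ih =>
      have hqi : q ^ i ≠ 0 := zpow_ne_zero _ hq
      rw [YM_add, EM_add, XM_add, EM_add, YM_add, smul_add, ih]
      have hs : EM k q tN uN (YM (Finsupp.single i v)) =
          XM k q tN (Finsupp.single i v) + q⁻¹ • YM (EM k q tN uN (Finsupp.single i v)) := by
        rw [YM_single, EM_single, EM_single, XM_single, YM_single, Finsupp.smul_single,
          show i + 1 - 2 = i - 1 from by omega, show i - 2 + 1 = i - 1 from by omega,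
          ← Finsupp.single_add]
        congr 1
        match_scalars <;>
        · simp only [zpow_add₀ hq, zpow_sub₀ hq, zpow_neg, zpow_one, zpow_natCast, zpow_ofNat]
          generalize hw : (q : k) ^ i = w at hqi ⊢
          field_simp [hq2, show (1:k) - q ^ 2 ≠ 0 by rwa [pow_two]] <;> ring
      rw [hs]
      abel
  · intro f
    induction f using Finsupp.induction with
    | zero => simp [YM_zero, XM_zero]
    | single_add i v g _ _ ih =>
      have hqi : q ^ i ≠ 0 := zpow_ne_zero _ hq
      rw [XM_add, YM_add, smul_add, YM_add, XM_add, ih,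
        XM_single, YM_single, YM_single, XM_single, Finsupp.smul_single,
        show i - 1 + 1 = i from by omega, show i + 1 - 1 = i from by omega, smul_smul]
      congr 1
      congr 1
      simp only [zpow_add₀ hq, zpow_sub₀ hq, zpow_neg, zpow_one, zpow_natCast, zpow_ofNat]
      ring

end
end
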